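/- Let K be a proper simplicial complex on [n]. A face A1 ∪ Ā2 of the Bier complex Bier(K) is a facet (maximal face) if and only if |A1| + |A2| = n − 1. Consequently the facets of Bier(K) are in bijective correspondence with the pairs (A, ν) where ν ∈ [n], A ⊆ [n] \ {ν}, A ∈ K and A ∪ {ν} ∉ K, the correspondence being A1 = A and A2 = [n] \ (A ∪ {ν}). -/
import Mathlib


open Finset

/-- A simplicial complex on `[n]`: a family of subsets containing `∅` and
closed under taking subsets. -/
def IsComplex (n : ℕ) (K : Set (Finset (Fin n))) : Prop :=
  ∅ ∈ K ∧ ∀ A B : Finset (Fin n), A ⊆ B → B ∈ K → A ∈ K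

/-- Faces of the Bier complex `Bier(K)` on the vertex set `[n] ⊔ [n̄]`
(encoded as `Fin n ⊕ Fin n`, with `Sum.inl` the unbarred copy and `Sum.inr`
the barred copy): sets `A1 ∪ Ā2` for disjoint `A1 ∈ K` and `A2 ∈ K°`
(i.e. `A2ᶜ ∉ K`). -/
def BierFace (n : ℕ) (K : Set (Finset (Fin n))) (τ : Finset (Fin n ⊕ Fin n)) : Prop :=
  ∃ A1 A2 : Finset (Fin n), Disjoint A1 A2 ∧ A1 ∈ K ∧ A2ᶜ ∉ K ∧
    τ = A1.image Sum.inl ∪ A2.image Sum.inr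

/-- A facet of `Bier(K)`: a face maximal with respect to inclusion. -/
def BierFacet (n : ℕ) (K : Set (Finset (Fin n))) (τ : Finset (Fin n ⊕ Fin n)) : Prop :=
  BierFace n K τ ∧ ∀ σ : Finset (Fin n ⊕ Fin n), BierFace n K σ → τ ⊆ σ → τ = σ

/-- For a proper simplicial complex `K` on `[n]`, a face
`A1 ∪ Ā2` of `Bier(K)` is a facet iff `|A1| + |A2| = n - 1`; consequently the
facets correspond exactly to the pairs `(A, ν)` with `ν ∉ A`, `A ∈ K`,
`A ∪ {ν} ∉ K` via `A1 = A`, `A2 = [n] \ (A ∪ {ν})`. -/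
lemma bierAux_subsets {n : ℕ} {A1 A2 B1 B2 : Finset (Fin n)}
    (h : A1.image Sum.inl ∪ A2.image Sum.inr ⊆ B1.image Sum.inl ∪ B2.image Sum.inr) :
    A1 ⊆ B1 ∧ A2 ⊆ B2 := by
  constructor <;> intro a ha
  · have h' := h (mem_union_left _ (mem_image_of_mem _ ha))
    rw [mem_union] at h'
    rcases h' with h' | h'
    · obtain ⟨b, hb, hba⟩ := mem_image.1 h'
      cases Sum.inl.inj hba; exact hb
    · obtain ⟨b, hb, hba⟩ := mem_image.1 h'
      exact absurd hba (by simp)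
  · have h' := h (mem_union_right _ (mem_image_of_mem _ ha))
    rw [mem_union] at h'
    rcases h' with h' | h'
    · obtain ⟨b, hb, hba⟩ := mem_image.1 h'
      exact absurd hba (by simp)
    · obtain ⟨b, hb, hba⟩ := mem_image.1 h'
      cases Sum.inr.inj hba; exact hb

lemma bierAux_card {n : ℕ} (A1 A2 : Finset (Fin n)) :
    (A1.image Sum.inl ∪ A2.image Sum.inr).card = A1.card + A2.card := by
  have hd : Disjoint (A1.image Sum.inl) (A2.image Sum.inr) := by
    simp [Finset.disjoint_left]
  rw [card_union_of_disjoint hd, card_image_of_injective _ Sum.inl_injective,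
    card_image_of_injective _ Sum.inr_injective]

lemma bierAux_bound {n : ℕ} {K : Set (Finset (Fin n))}
    {B1 B2 : Finset (Fin n)} (hd : Disjoint B1 B2) (h1 : B1 ∈ K) (h2 : B2ᶜ ∉ K) :
    B1.card + B2.card + 1 ≤ n := by
  have hsub : B1 ⊆ B2ᶜ := fun x hx => mem_compl.2 (disjoint_left.1 hd hx)
  have hne : B1 ≠ B2ᶜ := by rintro rfl; exact h2 h1
  have hlt : B1.card < B2ᶜ.card := card_lt_card (hsub.ssubset_of_ne hne)
  rw [card_compl, Fintype.card_fin] at hlt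
  have h2le : B2.card ≤ n := by
    have := card_le_univ B2; rwa [Fintype.card_fin] at this
  omega

theorem bierFacet_iff (n : ℕ) (K : Set (Finset (Fin n)))
    (hK : IsComplex n K) (hproper : K ≠ Set.univ)
    (A1 A2 : Finset (Fin n)) (hdis : Disjoint A1 A2) (h1 : A1 ∈ K) (h2 : A2ᶜ ∉ K) :
    (BierFacet n K (A1.image Sum.inl ∪ A2.image Sum.inr) ↔
      A1.card + A2.card = n - 1) ∧
    (BierFacet n K (A1.image Sum.inl ∪ A2.image Sum.inr) ↔
      ∃ ν : Fin n, ν ∉ A1 ∧ insert ν A1 ∉ K ∧ A2 = (insert ν A1)ᶜ) := by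
  have hb := bierAux_bound hdis h1 h2
  have main : BierFacet n K (A1.image Sum.inl ∪ A2.image Sum.inr) ↔
      A1.card + A2.card = n - 1 := by
    constructor
    · intro hf
      by_contra hne
      have hV : 1 < ((A1 ∪ A2)ᶜ).card := by
        rw [card_compl, Fintype.card_fin]
        have := card_union_le A1 A2
        omega
      obtain ⟨ν, hν, μ, hμ, hνμ⟩ := one_lt_card.1 hV
      simp only [mem_compl, mem_union, not_or] at hν hμ
      by_cases hνK : insert ν A1 ∈ K
      · have hface : BierFace n K ((insert ν A1).image Sum.inl ∪ A2.image Sum.inr) :=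
          ⟨insert ν A1, A2, disjoint_insert_left.2 ⟨hν.2, hdis⟩, hνK, h2, rfl⟩
        have hsub : A1.image Sum.inl ∪ A2.image Sum.inr ⊆
            (insert ν A1).image Sum.inl ∪ A2.image Sum.inr :=
          union_subset_union (image_subset_image (subset_insert _ _)) subset_rfl
        have heq := hf.2 _ hface hsub
        have hc := congrArg Finset.card heq
        rw [bierAux_card, bierAux_card, card_insert_of_notMem hν.1] at hc
        omega
      · by_cases hμK : insert μ A1 ∈ K
        · have hface : BierFace n K ((insert μ A1).image Sum.inl ∪ A2.image Sum.inr) :=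
            ⟨insert μ A1, A2, disjoint_insert_left.2 ⟨hμ.2, hdis⟩, hμK, h2, rfl⟩
          have hsub : A1.image Sum.inl ∪ A2.image Sum.inr ⊆
              (insert μ A1).image Sum.inl ∪ A2.image Sum.inr :=
            union_subset_union (image_subset_image (subset_insert _ _)) subset_rfl
          have heq := hf.2 _ hface hsub
          have hc := congrArg Finset.card heq
          rw [bierAux_card, bierAux_card, card_insert_of_notMem hμ.1] at hc
          omega
        · have hcompl : (insert ν A2)ᶜ ∉ K := by
            intro hmem
            apply hμK
            refine hK.2 _ _ ?_ hmem
            intro x hx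
            simp only [mem_compl, mem_insert, not_or]
            rcases mem_insert.1 hx with rfl | hx
            · exact ⟨hνμ.symm, hμ.2⟩
            · exact ⟨fun h => hν.1 (h ▸ hx), fun h => disjoint_left.1 hdis hx h⟩
          have hface : BierFace n K (A1.image Sum.inl ∪ (insert ν A2).image Sum.inr) :=
            ⟨A1, insert ν A2, disjoint_insert_right.2 ⟨hν.1, hdis⟩, h1, hcompl, rfl⟩
          have hsub : A1.image Sum.inl ∪ A2.image Sum.inr ⊆
              A1.image Sum.inl ∪ (insert ν A2).image Sum.inr :=
            union_subset_union subset_rfl (image_subset_image (subset_insert _ _))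
          have heq := hf.2 _ hface hsub
          have hc := congrArg Finset.card heq
          rw [bierAux_card, bierAux_card, card_insert_of_notMem hν.2] at hc
          omega
    · intro heq
      refine ⟨⟨A1, A2, hdis, h1, h2, rfl⟩, ?_⟩
      rintro σ ⟨B1, B2, hdB, hB1, hB2, rfl⟩ hsub
      obtain ⟨hs1, hs2⟩ := bierAux_subsets hsub
      have hbB := bierAux_bound hdB hB1 hB2
      have hc1 := card_le_card hs1
      have hc2 := card_le_card hs2
      have hA1 : A1 = B1 := eq_of_subset_of_card_le hs1 (by omega)
      have hA2 : A2 = B2 := eq_of_subset_of_card_le hs2 (by omega)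
      rw [hA1, hA2]
  have equiv2 : A1.card + A2.card = n - 1 ↔
      ∃ ν : Fin n, ν ∉ A1 ∧ insert ν A1 ∉ K ∧ A2 = (insert ν A1)ᶜ := by
    constructor
    · intro heq
      have hV : ((A1 ∪ A2)ᶜ).card = 1 := by
        rw [card_compl, Fintype.card_fin, card_union_of_disjoint hdis]
        omega
      obtain ⟨ν, hν⟩ := card_eq_one.1 hV
      have hνmem : ν ∈ (A1 ∪ A2)ᶜ := hν ▸ mem_singleton_self ν
      simp only [mem_compl, mem_union, not_or] at hνmem
      have hA2 : A2 = (insert ν A1)ᶜ := by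
        apply eq_of_subset_of_card_le
        · intro x hx
          simp only [mem_compl, mem_insert, not_or]
          exact ⟨fun h => hνmem.2 (h ▸ hx), fun h => disjoint_left.1 hdis h hx⟩
        · rw [card_compl, Fintype.card_fin, card_insert_of_notMem hνmem.1]
          omega
      refine ⟨ν, hνmem.1, ?_, hA2⟩
      rw [hA2, compl_compl] at h2
      exact h2
    · rintro ⟨ν, hν, hνK, rfl⟩
      rw [card_compl, Fintype.card_fin, card_insert_of_notMem hν]
      have h := card_le_univ (insert ν A1)
      rw [Fintype.card_fin] at h
      omega
  exact ⟨main, main.trans equiv2⟩
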